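/- For all real numbers a and b: ∫_ℝ φ(x) Φ(a + b·x) dx = Φ(a/√(1 + b²)). -/

import Mathlib

open MeasureTheory

/-- The standard normal density. -/
noncomputable def stdNormalPDF (x : ℝ) : ℝ :=
  (Real.sqrt (2 * Real.pi))⁻¹ * Real.exp (-x ^ 2 / 2)

/-- The standard normal cumulative distribution function. -/
noncomputable def stdNormalCDF (x : ℝ) : ℝ :=
  ∫ t in Set.Iio x, stdNormalPDF t

lemma integrable_stdNormalPDF : Integrable stdNormalPDF := by
  have h : stdNormalPDF = fun x => (Real.sqrt (2 * Real.pi))⁻¹ * Real.exp (-(2⁻¹) * x ^ 2) := by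
    funext x; unfold stdNormalPDF; ring_nf
  rw [h]
  exact (integrable_exp_neg_mul_sq (by norm_num)).const_mul _

lemma cdf_shift (a c : ℝ) : stdNormalCDF (a + c) = ∫ s in Set.Iio a, stdNormalPDF (s + c) := by
  have h1 : MeasurePreserving (fun x : ℝ => x + c) volume volume :=
    measurePreserving_add_right volume c
  have h2 : MeasurableEmbedding (fun x : ℝ => x + c) :=
    (Homeomorph.addRight c).measurableEmbedding
  have h3 := h1.setIntegral_preimage_emb h2 stdNormalPDF (Set.Iio (a + c))
  have h4 : (fun x : ℝ => x + c) ⁻¹' Set.Iio (a + c) = Set.Iio a := by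
    ext x; simp
  unfold stdNormalCDF
  rw [← h3, h4]

lemma integral_comp_mul_left_Iio' (g : ℝ → ℝ) (a : ℝ) {b : ℝ} (hb : 0 < b) :
    (∫ x in Set.Iio a, g (b * x)) = b⁻¹ • ∫ x in Set.Iio (b * a), g x := by
  have hm : ∀ c : ℝ, MeasurableSet (Set.Iio c) := fun c => measurableSet_Iio
  rw [← integral_indicator (hm a), ← integral_indicator (hm (b * a)),
    ← abs_of_pos (inv_pos.mpr hb), ← Measure.integral_comp_mul_left]
  congr
  ext1 x
  rw [← Set.indicator_comp_right, Set.preimage_const_mul_Iio₀ _ hb,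
    mul_div_cancel_left₀ _ hb.ne']
  rfl

lemma integral_exp_neg_mul_add_sq (k d : ℝ) :
    ∫ x : ℝ, Real.exp (-k * (x + d) ^ 2) = Real.sqrt (Real.pi / k) := by
  rw [← integral_gaussian k]
  exact integral_add_right_eq_self (fun x => Real.exp (-k * x ^ 2)) d

lemma inner_gauss_integral (b s : ℝ) :
    (∫ x : ℝ, stdNormalPDF x * stdNormalPDF (s + b * x)) =
      (Real.sqrt (1 + b ^ 2))⁻¹ * stdNormalPDF (s / Real.sqrt (1 + b ^ 2)) := by
  have hb : (0:ℝ) < 1 + b ^ 2 := by positivity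
  have h2π : (0:ℝ) < 2 * Real.pi := by positivity
  set k : ℝ := (1 + b ^ 2) / 2 with hk
  set d : ℝ := b * s / (1 + b ^ 2) with hd
  set C : ℝ := (Real.sqrt (2 * Real.pi))⁻¹ * (Real.sqrt (2 * Real.pi))⁻¹ *
      Real.exp (-s ^ 2 / (2 * (1 + b ^ 2))) with hC
  have heq : ∀ x : ℝ, stdNormalPDF x * stdNormalPDF (s + b * x)
      = C * Real.exp (-k * (x + d) ^ 2) := by
    intro x
    have e1 : -x ^ 2 / 2 + -(s + b * x) ^ 2 / 2
        = -s ^ 2 / (2 * (1 + b ^ 2)) + -k * (x + d) ^ 2 := by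
      rw [hk, hd]; field_simp; ring
    calc stdNormalPDF x * stdNormalPDF (s + b * x)
        = (Real.sqrt (2 * Real.pi))⁻¹ * (Real.sqrt (2 * Real.pi))⁻¹ *
            Real.exp (-x ^ 2 / 2 + -(s + b * x) ^ 2 / 2) := by
          unfold stdNormalPDF; rw [Real.exp_add]; ring
      _ = C * Real.exp (-k * (x + d) ^ 2) := by
          rw [e1, Real.exp_add, hC]; ring
  have hint : (∫ x : ℝ, stdNormalPDF x * stdNormalPDF (s + b * x))
      = C * Real.sqrt (Real.pi / k) := by
    simp_rw [heq]
    rw [integral_const_mul, integral_exp_neg_mul_add_sq]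
  rw [hint]
  have hsq : Real.sqrt (Real.pi / k) = Real.sqrt (2 * Real.pi) / Real.sqrt (1 + b ^ 2) := by
    rw [← Real.sqrt_div h2π.le]
    congr 1
    rw [hk]; field_simp
  have hexp : stdNormalPDF (s / Real.sqrt (1 + b ^ 2))
      = (Real.sqrt (2 * Real.pi))⁻¹ * Real.exp (-s ^ 2 / (2 * (1 + b ^ 2))) := by
    unfold stdNormalPDF
    congr 2
    rw [div_pow, Real.sq_sqrt hb.le]
    field_simp
  rw [hsq, hexp, hC]
  have hne : Real.sqrt (2 * Real.pi) ≠ 0 := by positivity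
  have hne2 : Real.sqrt (1 + b ^ 2) ≠ 0 := by positivity
  field_simp

/-- Azzalini's Lemma 2.2: `∫ φ(x) Φ(a + b·x) dx = Φ(a/√(1 + b²))`. -/
theorem azzalini_lemma (a b : ℝ) :
    (∫ x : ℝ, stdNormalPDF x * stdNormalCDF (a + b * x)) =
      stdNormalCDF (a / Real.sqrt (1 + b ^ 2)) := by
  have hb : (0:ℝ) < 1 + b ^ 2 := by positivity
  set c : ℝ := Real.sqrt (1 + b ^ 2) with hc
  have hcpos : 0 < c := Real.sqrt_pos.mpr hb
  -- Step 1: rewrite the CDF as a set integral over `Iio a` and pull the density inside.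
  have step1 : (∫ x : ℝ, stdNormalPDF x * stdNormalCDF (a + b * x))
      = ∫ x : ℝ, ∫ s in Set.Iio a, stdNormalPDF x * stdNormalPDF (s + b * x) := by
    refine integral_congr_ae (Filter.Eventually.of_forall fun x => ?_)
    dsimp only
    rw [cdf_shift a (b * x), ← integral_const_mul]
  -- Step 2: Fubini.
  have hT : MeasurePreserving (fun p : ℝ × ℝ => (p.1, p.2 + b * p.1))
      ((volume : Measure ℝ).prod volume) ((volume : Measure ℝ).prod volume) :=
    (MeasurePreserving.id volume).skew_product (g := fun x y => y + b * x)
      (measurable_snd.add (measurable_fst.const_mul b))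
      (Filter.Eventually.of_forall fun x => (measurePreserving_add_right volume (b * x)).map_eq)
  have hF : Integrable (fun p : ℝ × ℝ => stdNormalPDF p.1 * stdNormalPDF p.2)
      ((volume : Measure ℝ).prod volume) :=
    integrable_stdNormalPDF.mul_prod integrable_stdNormalPDF
  have hfull : Integrable (fun p : ℝ × ℝ => stdNormalPDF p.1 * stdNormalPDF (p.2 + b * p.1))
      ((volume : Measure ℝ).prod volume) :=
    (hT.integrable_comp hF.aestronglyMeasurable).mpr hF
  have hrestr : Integrable (fun p : ℝ × ℝ => stdNormalPDF p.1 * stdNormalPDF (p.2 + b * p.1))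
      ((volume : Measure ℝ).prod (volume.restrict (Set.Iio a))) := by
    have hmeq : (volume : Measure ℝ).prod (volume.restrict (Set.Iio a))
        = ((volume : Measure ℝ).prod volume).restrict (Set.univ ×ˢ Set.Iio a) := by
      rw [← Measure.prod_restrict, Measure.restrict_univ]
    rw [hmeq]
    exact hfull.restrict
  have step2 : (∫ x : ℝ, ∫ s in Set.Iio a, stdNormalPDF x * stdNormalPDF (s + b * x))
      = ∫ s in Set.Iio a, ∫ x : ℝ, stdNormalPDF x * stdNormalPDF (s + b * x) :=
    integral_integral_swap hrestr
  -- Step 3: compute the inner integral and conclude by a change of variables.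
  rw [step1, step2]
  have step3 : (∫ s in Set.Iio a, ∫ x : ℝ, stdNormalPDF x * stdNormalPDF (s + b * x))
      = ∫ s in Set.Iio a, c⁻¹ * stdNormalPDF (s / c) := by
    refine integral_congr_ae (Filter.Eventually.of_forall fun s => ?_)
    exact inner_gauss_integral b s
  rw [step3, integral_const_mul]
  have hchg : (∫ s in Set.Iio a, stdNormalPDF (s / c))
      = c • ∫ x in Set.Iio (c⁻¹ * a), stdNormalPDF x := by
    have := integral_comp_mul_left_Iio' stdNormalPDF a (inv_pos.mpr hcpos)
    simp only [inv_inv] at this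
    rw [← this]
    refine integral_congr_ae (Filter.Eventually.of_forall fun s => ?_)
    dsimp only
    rw [div_eq_inv_mul]
  rw [hchg]
  have : c⁻¹ * a = a / c := (div_eq_inv_mul a c).symm
  rw [this, smul_eq_mul, ← mul_assoc, inv_mul_cancel₀ hcpos.ne', one_mul]
  rfl
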